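/- Let k, μ ≥ 0, α ∈ ℝ, and let g : ℝ → ℝ be Lipschitz with constant k and satisfy |g(z) − αz| ≤ μ|z| for all z ∈ ℝ. Define f(x, η, ε) := −ηx + (1 − εη)g(x) and h(ξ, η, ε) := −ηξ + (1 − εη)αξ. Fix a ∈ ℝ and R > 0. For ε ≥ 0 and y = (η, b) with |η| ≤ R and |b| ≤ R, let x_y and ξ_y be continuous functions on [0, 2π] satisfying x_y(θ) = a cos θ + εb sin θ − ε ∫₀^θ sin(θ − s) f(x_y(s), η, ε) ds and ξ_y(θ) = a cos θ + εb sin θ − ε ∫₀^θ sin(θ − s) h(ξ_y(s), η, ε) ds, and set F(y) = (∫₀^{2π} sin(s) f(x_y(s), η, ε) ds, ∫₀^{2π} cos(s) f(x_y(s), η, ε) ds), H(y) defined analogously with h and ξ_y, and E := F − H. Then there exist constants C ≥ 0 and ε̄ > 0, depending only on k, μ, α, a, R, such that for all ε ∈ [0, ε̄] and all y, ỹ with |η|, |b|, |η̃|, |b̃| ≤ R, ‖E(ỹ) − E(y)‖ ≤ C ε ‖ỹ − y‖. -/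

import Mathlib

open Real MeasureTheory intervalIntegral


lemma contraction_sup {T : ℝ} (hT : 0 ≤ T) {u : ℝ → ℝ}
    (hu : ContinuousOn u (Set.Icc 0 T)) {A D : ℝ} (hD : D ≤ 1/2)
    (hstep : ∀ M, 0 ≤ M → (∀ s ∈ Set.Icc (0:ℝ) T, |u s| ≤ M) →
      ∀ θ ∈ Set.Icc (0:ℝ) T, |u θ| ≤ A + D * M) :
    ∀ θ ∈ Set.Icc (0:ℝ) T, |u θ| ≤ 2 * A := by
  obtain ⟨θ₀, hθ₀, hmax⟩ := isCompact_Icc.exists_isMaxOn (Set.nonempty_Icc.2 hT) hu.abs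
  have hS0 : 0 ≤ |u θ₀| := abs_nonneg _
  have hSb : ∀ s ∈ Set.Icc (0:ℝ) T, |u s| ≤ |u θ₀| := fun s hs => hmax hs
  have h1 : |u θ₀| ≤ A + D * |u θ₀| := hstep _ hS0 hSb θ₀ hθ₀
  have h2 : D * |u θ₀| ≤ (1/2) * |u θ₀| := mul_le_mul_of_nonneg_right hD hS0
  intro θ hθ
  have := hSb θ hθ
  linarith

lemma integ_aux {P : ℝ → ℝ} (hPc : Continuous P) {u : ℝ → ℝ}
    (hu : ContinuousOn u (Set.Icc 0 (2*π))) {θ : ℝ} (hθ : θ ∈ Set.Icc (0:ℝ) (2*π))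
    {w : ℝ → ℝ} (hw : Continuous w) :
    IntervalIntegrable (fun s => w s * P (u s)) volume 0 θ := by
  apply ContinuousOn.intervalIntegrable
  have hsub : Set.uIcc (0:ℝ) θ ⊆ Set.Icc 0 (2*π) := by
    rw [Set.uIcc_of_le hθ.1]; exact Set.Icc_subset_Icc le_rfl hθ.2
  exact (hw.continuousOn.mono hsub).mul (hPc.comp_continuousOn (hu.mono hsub))


lemma sol_bound {a R ε c0 c1 : ℝ} (hε0 : 0 ≤ ε) (hε1 : ε ≤ 1)
    (hc0 : 0 ≤ c0) (hc1 : 0 ≤ c1) (hD : ε * (2 * π) * c1 ≤ 1/2)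
    {b : ℝ} (hb : |b| ≤ R)
    {P : ℝ → ℝ} (hP : ∀ z, |P z| ≤ c0 + c1 * |z|)
    {u : ℝ → ℝ} (hu : ContinuousOn u (Set.Icc 0 (2*π)))
    (heq : ∀ θ ∈ Set.Icc (0:ℝ) (2*π), u θ = a * Real.cos θ + ε * b * Real.sin θ
      - ε * ∫ s in (0:ℝ)..θ, Real.sin (θ - s) * P (u s)) :
    ∀ θ ∈ Set.Icc (0:ℝ) (2*π), |u θ| ≤ 2 * (|a| + R + 2*π*c0) := by
  have hπ : (0:ℝ) < π := Real.pi_pos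
  have hT : (0:ℝ) ≤ 2*π := by positivity
  have hR0 : 0 ≤ R := le_trans (abs_nonneg b) hb
  have key := contraction_sup hT hu (A := |a| + R + 2*π*c0) (D := ε * (2*π) * c1)
    hD ?_
  · simpa using key
  · intro M hM hMb θ hθ
    rw [heq θ hθ]
    have hI : ‖∫ s in (0:ℝ)..θ, Real.sin (θ - s) * P (u s)‖ ≤ (c0 + c1 * M) * |θ - 0| := by
      apply intervalIntegral.norm_integral_le_of_norm_le_const
      intro s hs
      rw [Set.uIoc_of_le hθ.1] at hs
      have hsIcc : s ∈ Set.Icc (0:ℝ) (2*π) := ⟨le_of_lt hs.1, le_trans hs.2 hθ.2⟩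
      have h1 : |Real.sin (θ - s) * P (u s)| ≤ 1 * |P (u s)| := by
        rw [abs_mul]
        exact mul_le_mul_of_nonneg_right (abs_sin_le_one _) (abs_nonneg _)
      have h2 : |P (u s)| ≤ c0 + c1 * M := by
        have := hP (u s)
        have := hMb s hsIcc
        nlinarith
      calc ‖Real.sin (θ - s) * P (u s)‖ = |Real.sin (θ - s) * P (u s)| := rfl
        _ ≤ 1 * |P (u s)| := h1
        _ ≤ c0 + c1 * M := by linarith
    have hθabs : |θ - 0| ≤ 2*π := by
      rw [sub_zero, abs_of_nonneg hθ.1]; exact hθ.2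
    rw [Real.norm_eq_abs] at hI
    have hIb : ε * |∫ s in (0:ℝ)..θ, Real.sin (θ - s) * P (u s)|
        ≤ ε * ((c0 + c1 * M) * (2*π)) := by
      apply mul_le_mul_of_nonneg_left _ hε0
      calc |∫ s in (0:ℝ)..θ, Real.sin (θ - s) * P (u s)| ≤ (c0 + c1 * M) * |θ - 0| := hI
        _ ≤ (c0 + c1 * M) * (2*π) := by
            apply mul_le_mul_of_nonneg_left hθabs
            nlinarith
    have hac : |a * Real.cos θ| ≤ |a| := by
      rw [abs_mul]
      nlinarith [abs_cos_le_one θ, abs_nonneg a, abs_nonneg (Real.cos θ)]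
    have hbs : |ε * b * Real.sin θ| ≤ ε * R := by
      rw [abs_mul, abs_mul, abs_of_nonneg hε0]
      calc ε * |b| * |Real.sin θ| ≤ ε * |b| * 1 :=
            mul_le_mul_of_nonneg_left (abs_sin_le_one θ) (by positivity)
        _ = ε * |b| := by ring
        _ ≤ ε * R := mul_le_mul_of_nonneg_left hb hε0
    have htri : |a * Real.cos θ + ε * b * Real.sin θ
        - ε * ∫ s in (0:ℝ)..θ, Real.sin (θ - s) * P (u s)|
        ≤ |a * Real.cos θ| + |ε * b * Real.sin θ|
          + ε * |∫ s in (0:ℝ)..θ, Real.sin (θ - s) * P (u s)| := by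
      have h' := abs_sub (a * Real.cos θ + ε * b * Real.sin θ)
        (ε * ∫ s in (0:ℝ)..θ, Real.sin (θ - s) * P (u s))
      have h'' := abs_add_le (a * Real.cos θ) (ε * b * Real.sin θ)
      rw [abs_mul, abs_of_nonneg hε0] at h'
      linarith
    have hfin : |a| + ε * R + ε * ((c0 + c1 * M) * (2*π))
        ≤ (|a| + R + 2*π*c0) + ε * (2*π) * c1 * M := by
      nlinarith [mul_nonneg (sub_nonneg.2 hε1) (mul_nonneg hT hc0),
        mul_nonneg (sub_nonneg.2 hε1) hR0]
    linarith


lemma diff_bound {a ε c1 Q : ℝ} (hε0 : 0 ≤ ε)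
    (hc1 : 0 ≤ c1) (hQ : 0 ≤ Q) (hD : ε * (2 * π) * c1 ≤ 1/2)
    {b b' : ℝ}
    {P P' : ℝ → ℝ} (hPc : Continuous P) (hP'c : Continuous P')
    (hLip : ∀ z w, |P' z - P' w| ≤ c1 * |z - w|)
    {u u' : ℝ → ℝ} (hu : ContinuousOn u (Set.Icc 0 (2*π)))
    (hu' : ContinuousOn u' (Set.Icc 0 (2*π)))
    (hPQ : ∀ s ∈ Set.Icc (0:ℝ) (2*π), |P' (u s) - P (u s)| ≤ Q)
    (heq : ∀ θ ∈ Set.Icc (0:ℝ) (2*π), u θ = a * Real.cos θ + ε * b * Real.sin θ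
      - ε * ∫ s in (0:ℝ)..θ, Real.sin (θ - s) * P (u s))
    (heq' : ∀ θ ∈ Set.Icc (0:ℝ) (2*π), u' θ = a * Real.cos θ + ε * b' * Real.sin θ
      - ε * ∫ s in (0:ℝ)..θ, Real.sin (θ - s) * P' (u' s)) :
    ∀ θ ∈ Set.Icc (0:ℝ) (2*π), |u' θ - u θ| ≤ 2 * (ε * |b' - b| + ε * (2*π) * Q) := by
  have hπ : (0:ℝ) < π := Real.pi_pos
  have hT : (0:ℝ) ≤ 2*π := by positivity
  have key := contraction_sup hT (hu'.sub hu) (A := ε * |b' - b| + ε * (2*π) * Q)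
    (D := ε * (2*π) * c1) hD ?_
  · exact key
  · intro M hM hMb θ hθ
    have hws : Continuous fun s : ℝ => Real.sin (θ - s) :=
      Real.continuous_sin.comp (continuous_const.sub continuous_id)
    have hint : IntervalIntegrable (fun s => Real.sin (θ - s) * P (u s)) volume 0 θ :=
      integ_aux hPc hu hθ hws
    have hint' : IntervalIntegrable (fun s => Real.sin (θ - s) * P' (u' s)) volume 0 θ :=
      integ_aux hP'c hu' hθ hws
    have hsplit : u' θ - u θ = ε * (b' - b) * Real.sin θ
        - ε * ∫ s in (0:ℝ)..θ, Real.sin (θ - s) * (P' (u' s) - P (u s)) := by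
      rw [heq' θ hθ, heq θ hθ]
      have : (∫ s in (0:ℝ)..θ, Real.sin (θ - s) * (P' (u' s) - P (u s)))
          = (∫ s in (0:ℝ)..θ, Real.sin (θ - s) * P' (u' s))
            - ∫ s in (0:ℝ)..θ, Real.sin (θ - s) * P (u s) := by
        rw [← intervalIntegral.integral_sub hint' hint]
        congr 1; funext s; ring
      rw [this]; ring
    have hI : ‖∫ s in (0:ℝ)..θ, Real.sin (θ - s) * (P' (u' s) - P (u s))‖
        ≤ (c1 * M + Q) * |θ - 0| := by
      apply intervalIntegral.norm_integral_le_of_norm_le_const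
      intro s hs
      rw [Set.uIoc_of_le hθ.1] at hs
      have hsIcc : s ∈ Set.Icc (0:ℝ) (2*π) := ⟨le_of_lt hs.1, le_trans hs.2 hθ.2⟩
      have h2 : |P' (u' s) - P (u s)| ≤ c1 * M + Q := by
        have ha := hLip (u' s) (u s)
        have hb' := hPQ s hsIcc
        have hc := hMb s hsIcc
        have := abs_sub_le (P' (u' s)) (P' (u s)) (P (u s))
        have : c1 * |u' s - u s| ≤ c1 * M := mul_le_mul_of_nonneg_left hc hc1
        nlinarith [hLip (u' s) (u s), abs_sub_le (P' (u' s)) (P' (u s)) (P (u s))]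
      calc ‖Real.sin (θ - s) * (P' (u' s) - P (u s))‖
          = |Real.sin (θ - s)| * |P' (u' s) - P (u s)| := abs_mul _ _
        _ ≤ 1 * (c1 * M + Q) :=
            mul_le_mul (abs_sin_le_one _) h2 (abs_nonneg _) zero_le_one
        _ = c1 * M + Q := one_mul _
    rw [Real.norm_eq_abs] at hI
    have hθabs : |θ - 0| ≤ 2*π := by
      rw [sub_zero, abs_of_nonneg hθ.1]; exact hθ.2
    have hIb : ε * |∫ s in (0:ℝ)..θ, Real.sin (θ - s) * (P' (u' s) - P (u s))|
        ≤ ε * ((c1 * M + Q) * (2*π)) := by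
      apply mul_le_mul_of_nonneg_left _ hε0
      calc |∫ s in (0:ℝ)..θ, Real.sin (θ - s) * (P' (u' s) - P (u s))|
          ≤ (c1 * M + Q) * |θ - 0| := hI
        _ ≤ (c1 * M + Q) * (2*π) := by
            apply mul_le_mul_of_nonneg_left hθabs
            nlinarith
    have hbs : |ε * (b' - b) * Real.sin θ| ≤ ε * |b' - b| := by
      rw [abs_mul, abs_mul, abs_of_nonneg hε0]
      calc ε * |b' - b| * |Real.sin θ| ≤ ε * |b' - b| * 1 :=
            mul_le_mul_of_nonneg_left (abs_sin_le_one θ) (by positivity)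
        _ = ε * |b' - b| := by ring
    rw [Pi.sub_apply, hsplit]
    have habs3 : |ε * ∫ s in (0:ℝ)..θ, Real.sin (θ - s) * (P' (u' s) - P (u s))|
        = ε * |∫ s in (0:ℝ)..θ, Real.sin (θ - s) * (P' (u' s) - P (u s))| := by
      rw [abs_mul, abs_of_nonneg hε0]
    have htri := abs_sub (ε * (b' - b) * Real.sin θ)
      (ε * ∫ s in (0:ℝ)..θ, Real.sin (θ - s) * (P' (u' s) - P (u s)))
    rw [habs3] at htri
    linarith


lemma comb {B : ℝ} {w f1 f2 f3 f4 : ℝ → ℝ}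
    (hw : ∀ s, |w s| ≤ 1)
    (h1 : IntervalIntegrable (fun s => w s * f1 s) volume 0 (2*π))
    (h2 : IntervalIntegrable (fun s => w s * f2 s) volume 0 (2*π))
    (h3 : IntervalIntegrable (fun s => w s * f3 s) volume 0 (2*π))
    (h4 : IntervalIntegrable (fun s => w s * f4 s) volume 0 (2*π))
    (hbd : ∀ s ∈ Set.Icc (0:ℝ) (2*π), |f1 s - f2 s - (f3 s - f4 s)| ≤ B) :
    |((∫ s in (0:ℝ)..(2*π), w s * f1 s) - ∫ s in (0:ℝ)..(2*π), w s * f2 s)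
      - ((∫ s in (0:ℝ)..(2*π), w s * f3 s) - ∫ s in (0:ℝ)..(2*π), w s * f4 s)|
      ≤ B * (2*π) := by
  have hT : (0:ℝ) ≤ 2*π := by positivity
  have hB : 0 ≤ B := le_trans (abs_nonneg _) (hbd 0 ⟨le_refl _, hT⟩)
  rw [← intervalIntegral.integral_sub h1 h2, ← intervalIntegral.integral_sub h3 h4,
    ← intervalIntegral.integral_sub (h1.sub h2) (h3.sub h4)]
  have := intervalIntegral.norm_integral_le_of_norm_le_const (C := B)
    (f := fun s => w s * f1 s - w s * f2 s - (w s * f3 s - w s * f4 s))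
    (a := (0:ℝ)) (b := 2*π) ?_
  · rw [Real.norm_eq_abs, sub_zero, abs_of_nonneg hT] at this
    exact this
  · intro s hs
    rw [Set.uIoc_of_le hT] at hs
    have hsIcc : s ∈ Set.Icc (0:ℝ) (2*π) := ⟨le_of_lt hs.1, hs.2⟩
    have heq : w s * f1 s - w s * f2 s - (w s * f3 s - w s * f4 s)
        = w s * (f1 s - f2 s - (f3 s - f4 s)) := by ring
    show |w s * f1 s - w s * f2 s - (w s * f3 s - w s * f4 s)| ≤ B
    rw [heq, abs_mul]
    calc |w s| * |f1 s - f2 s - (f3 s - f4 s)| ≤ 1 * B :=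
        mul_le_mul (hw s) (hbd s hsIcc) (abs_nonneg _) zero_le_one
      _ = B := one_mul _


lemma P_growth {R ε η G0 K c0 c1 : ℝ} (hε0 : 0 ≤ ε) (hε1 : ε ≤ 1) (hη : |η| ≤ R)
    {ψ : ℝ → ℝ} (hψ : ∀ z, |ψ z| ≤ G0 + K * |z|) (hG0 : 0 ≤ G0) (hK : 0 ≤ K)
    (hc0 : (1+R)*G0 ≤ c0) (hc1 : R + (1+R)*K ≤ c1) :
    ∀ z, |(-η*z + (1-ε*η)*ψ z)| ≤ c0 + c1 * |z| := by
  intro z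
  have hR0 : 0 ≤ R := le_trans (abs_nonneg η) hη
  have h1 : |(-η*z + (1-ε*η)*ψ z)| ≤ |η| * |z| + |1-ε*η| * |ψ z| := by
    calc |(-η*z + (1-ε*η)*ψ z)| ≤ |(-η*z)| + |(1-ε*η)*ψ z| := abs_add_le _ _
      _ = |η| * |z| + |1-ε*η| * |ψ z| := by rw [abs_mul, abs_mul, abs_neg]
  have h2 : |1-ε*η| ≤ 1 + R := by
    calc |1-ε*η| ≤ |(1:ℝ)| + |ε*η| := abs_sub 1 (ε*η)
      _ = 1 + ε * |η| := by rw [abs_one, abs_mul, abs_of_nonneg hε0]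
      _ ≤ 1 + R := by nlinarith [abs_nonneg η]
  have h3 : |1-ε*η| * |ψ z| ≤ (1+R) * (G0 + K * |z|) :=
    mul_le_mul h2 (hψ z) (abs_nonneg _) (by linarith)
  have h4 : |η| * |z| ≤ R * |z| := mul_le_mul_of_nonneg_right hη (abs_nonneg z)
  nlinarith [abs_nonneg z, mul_le_mul_of_nonneg_right hc1 (abs_nonneg z)]

lemma P_lip {R ε η K c1 : ℝ} (hε0 : 0 ≤ ε) (hε1 : ε ≤ 1) (hη : |η| ≤ R)
    {ψ : ℝ → ℝ} (hψ : ∀ z w, |ψ z - ψ w| ≤ K * |z - w|) (hK : 0 ≤ K)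
    (hc1 : R + (1+R)*K ≤ c1) :
    ∀ z w, |(-η*z + (1-ε*η)*ψ z) - (-η*w + (1-ε*η)*ψ w)| ≤ c1 * |z - w| := by
  intro z w
  have hR0 : 0 ≤ R := le_trans (abs_nonneg η) hη
  have he : (-η*z + (1-ε*η)*ψ z) - (-η*w + (1-ε*η)*ψ w)
      = -(η*(z-w)) + (1-ε*η)*(ψ z - ψ w) := by ring
  rw [he]
  have h1 : |(-(η*(z-w)) + (1-ε*η)*(ψ z - ψ w))|
      ≤ |η| * |z-w| + |1-ε*η| * |ψ z - ψ w| := by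
    calc |(-(η*(z-w)) + (1-ε*η)*(ψ z - ψ w))|
        ≤ |(-(η*(z-w)))| + |(1-ε*η)*(ψ z - ψ w)| := abs_add_le _ _
      _ = |η| * |z-w| + |1-ε*η| * |ψ z - ψ w| := by rw [abs_neg, abs_mul, abs_mul]
  have h2 : |1-ε*η| ≤ 1 + R := by
    calc |1-ε*η| ≤ |(1:ℝ)| + |ε*η| := abs_sub 1 (ε*η)
      _ = 1 + ε * |η| := by rw [abs_one, abs_mul, abs_of_nonneg hε0]
      _ ≤ 1 + R := by nlinarith [abs_nonneg η]
  have h3 : |1-ε*η| * |ψ z - ψ w| ≤ (1+R) * (K * |z - w|) :=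
    mul_le_mul h2 (hψ z w) (abs_nonneg _) (by linarith)
  have h4 : |η| * |z-w| ≤ R * |z-w| := mul_le_mul_of_nonneg_right hη (abs_nonneg _)
  nlinarith [abs_nonneg (z-w), mul_le_mul_of_nonneg_right hc1 (abs_nonneg (z-w))]

lemma PQ_aux {ε η η' : ℝ} (hε0 : 0 ≤ ε) (hε1 : ε ≤ 1) (ψ : ℝ → ℝ) (z : ℝ) :
    |(-η'*z + (1-ε*η')*ψ z) - (-η*z + (1-ε*η)*ψ z)| ≤ |η' - η| * (|z| + |ψ z|) := by
  have he : (-η'*z + (1-ε*η')*ψ z) - (-η*z + (1-ε*η)*ψ z)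
      = -((η'-η)*z) - ε*((η'-η)*ψ z) := by ring
  rw [he]
  calc |(-((η'-η)*z) - ε*((η'-η)*ψ z))|
      ≤ |(-((η'-η)*z))| + |ε*((η'-η)*ψ z)| := abs_sub _ _
    _ = |η' - η| * |z| + ε * (|η' - η| * |ψ z|) := by
        rw [abs_neg, abs_mul, abs_mul, abs_mul, abs_of_nonneg hε0]
    _ ≤ |η' - η| * (|z| + |ψ z|) := by
        nlinarith [abs_nonneg (η'-η), abs_nonneg (ψ z), abs_nonneg z,
          mul_nonneg (abs_nonneg (η'-η)) (abs_nonneg (ψ z))]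


lemma abs_add4 (A B C D : ℝ) : |A + B + C + D| ≤ |A| + |B| + |C| + |D| := by
  calc |A + B + C + D| ≤ |A + B + C| + |D| := abs_add_le _ _
    _ ≤ (|A + B| + |C|) + |D| := by linarith [abs_add_le (A + B) C]
    _ ≤ |A| + |B| + |C| + |D| := by linarith [abs_add_le A B]

set_option maxHeartbeats 2000000 in
/-- `H` is a strict estimator of `F` uniformly in `p = (a, ε)`: the Lipschitz modulus of
`E = F − H` with respect to `y = (η, b)` is at most `Cε`. Here `f(x,η,ε) = −ηx + (1−εη)g(x)`,
`h(ξ,η,ε) = −ηξ + (1−εη)αξ`, and `x_y`, `ξ_y` solve the corresponding integral equations. -/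
theorem stmt_14 (k μ : ℝ) (hk : 0 ≤ k) (hμ : 0 ≤ μ) (α : ℝ)
    (g : ℝ → ℝ) (hg : ∀ z w : ℝ, |g z - g w| ≤ k * |z - w|)
    (hgα : ∀ z : ℝ, |g z - α * z| ≤ μ * |z|)
    (a R : ℝ) (hR : 0 < R) :
    ∃ C : ℝ, 0 ≤ C ∧ ∃ εbar : ℝ, 0 < εbar ∧
      ∀ ε : ℝ, ε ∈ Set.Icc (0:ℝ) εbar →
      ∀ η b η' b' : ℝ, |η| ≤ R → |b| ≤ R → |η'| ≤ R → |b'| ≤ R →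
      ∀ x x' ξ ξ' : ℝ → ℝ,
        ContinuousOn x (Set.Icc 0 (2 * π)) → ContinuousOn x' (Set.Icc 0 (2 * π)) →
        ContinuousOn ξ (Set.Icc 0 (2 * π)) → ContinuousOn ξ' (Set.Icc 0 (2 * π)) →
        (∀ θ ∈ Set.Icc (0:ℝ) (2 * π),
          x θ = a * Real.cos θ + ε * b * Real.sin θ
            - ε * ∫ s in (0:ℝ)..θ, Real.sin (θ - s) * (-η * x s + (1 - ε * η) * g (x s))) →
        (∀ θ ∈ Set.Icc (0:ℝ) (2 * π),
          x' θ = a * Real.cos θ + ε * b' * Real.sin θ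
            - ε * ∫ s in (0:ℝ)..θ, Real.sin (θ - s) * (-η' * x' s + (1 - ε * η') * g (x' s))) →
        (∀ θ ∈ Set.Icc (0:ℝ) (2 * π),
          ξ θ = a * Real.cos θ + ε * b * Real.sin θ
            - ε * ∫ s in (0:ℝ)..θ, Real.sin (θ - s) * (-η * ξ s + (1 - ε * η) * (α * ξ s))) →
        (∀ θ ∈ Set.Icc (0:ℝ) (2 * π),
          ξ' θ = a * Real.cos θ + ε * b' * Real.sin θ
            - ε * ∫ s in (0:ℝ)..θ, Real.sin (θ - s) * (-η' * ξ' s + (1 - ε * η') * (α * ξ' s))) →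
        ‖(((∫ s in (0:ℝ)..(2 * π), Real.sin s * (-η' * x' s + (1 - ε * η') * g (x' s)))
            - (∫ s in (0:ℝ)..(2 * π), Real.sin s * (-η' * ξ' s + (1 - ε * η') * (α * ξ' s))))
          - ((∫ s in (0:ℝ)..(2 * π), Real.sin s * (-η * x s + (1 - ε * η) * g (x s)))
            - (∫ s in (0:ℝ)..(2 * π), Real.sin s * (-η * ξ s + (1 - ε * η) * (α * ξ s)))),
          ((∫ s in (0:ℝ)..(2 * π), Real.cos s * (-η' * x' s + (1 - ε * η') * g (x' s)))
            - (∫ s in (0:ℝ)..(2 * π), Real.cos s * (-η' * ξ' s + (1 - ε * η') * (α * ξ' s))))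
          - ((∫ s in (0:ℝ)..(2 * π), Real.cos s * (-η * x s + (1 - ε * η) * g (x s)))
            - (∫ s in (0:ℝ)..(2 * π), Real.cos s * (-η * ξ s + (1 - ε * η) * (α * ξ s)))))‖
        ≤ C * ε * ‖((η' - η, b' - b) : ℝ × ℝ)‖ := by
  have hπ : (0:ℝ) < π := Real.pi_pos
  have hT : (0:ℝ) ≤ 2*π := by positivity
  have hR0 : (0:ℝ) ≤ R := hR.le
  have hα0 : (0:ℝ) ≤ |α| := abs_nonneg α
  have hgc : Continuous g := by
    have hl : LipschitzWith ⟨k, hk⟩ g := by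
      apply LipschitzWith.of_dist_le_mul
      intro z w
      rw [Real.dist_eq, Real.dist_eq]; exact hg z w
    exact hl.continuous
  obtain ⟨G0, hG0d⟩ : ∃ t : ℝ, t = |g 0| := ⟨_, rfl⟩
  have hG0n : 0 ≤ G0 := by rw [hG0d]; exact abs_nonneg _
  have hgb : ∀ z, |g z| ≤ G0 + k * |z| := by
    intro z
    rw [hG0d]
    calc |g z| = |(g z - g 0) + g 0| := by ring_nf
      _ ≤ |g z - g 0| + |g 0| := abs_add_le _ _
      _ ≤ k * |z - 0| + |g 0| := by linarith [hg z 0]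
      _ = |g 0| + k * |z| := by rw [sub_zero]; ring
  obtain ⟨c0, hc0d⟩ : ∃ t : ℝ, t = (1+R)*G0 := ⟨_, rfl⟩
  have hc0n : 0 ≤ c0 := by rw [hc0d]; nlinarith
  obtain ⟨c1, hc1d⟩ : ∃ t : ℝ, t = R + (1+R)*(k + |α|) := ⟨_, rfl⟩
  have hc1n : 0 ≤ c1 := by rw [hc1d]; nlinarith
  obtain ⟨M, hMd⟩ : ∃ t : ℝ, t = 2*(|a| + R + 2*π*c0) := ⟨_, rfl⟩
  have hMn : 0 ≤ M := by rw [hMd]; nlinarith [abs_nonneg a, mul_nonneg hT hc0n]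
  obtain ⟨Q0, hQ0d⟩ : ∃ t : ℝ, t = M + G0 + (k+|α|)*M := ⟨_, rfl⟩
  have hQ0n : 0 ≤ Q0 := by rw [hQ0d]; nlinarith [mul_nonneg (add_nonneg hk hα0) hMn]
  obtain ⟨CB, hCBd⟩ : ∃ t : ℝ, t = 2 + 4*π*Q0 := ⟨_, rfl⟩
  have hCBn : 0 ≤ CB := by
    rw [hCBd]
    nlinarith [mul_nonneg (mul_nonneg (by norm_num : (0:ℝ) ≤ 4) hπ.le) hQ0n]
  obtain ⟨C3, hC3d⟩ : ∃ t : ℝ, t = 4*π*((1+R)*μ*M) := ⟨_, rfl⟩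
  have hC3n : 0 ≤ C3 := by
    rw [hC3d]
    nlinarith [mul_nonneg (mul_nonneg (mul_nonneg (by linarith : (0:ℝ) ≤ 1+R) hμ) hMn) hπ.le]
  obtain ⟨C4, hC4d⟩ : ∃ t : ℝ, t = 2*R*CB + C3 + (1+R)*(k+|α|)*CB + μ*M + |α| *C3 := ⟨_, rfl⟩
  have hC4n : 0 ≤ C4 := by
    rw [hC4d]
    nlinarith [mul_nonneg (mul_nonneg hR0 hCBn) (by norm_num : (0:ℝ) ≤ 2),
      mul_nonneg (mul_nonneg (by linarith : (0:ℝ) ≤ 1+R) (add_nonneg hk hα0)) hCBn,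
      mul_nonneg hμ hMn, mul_nonneg hα0 hC3n]
  have hden : (0:ℝ) < 2*π*c1 + 1 := by nlinarith [mul_nonneg hT hc1n]
  refine ⟨2*π*C4, by nlinarith [mul_nonneg hT hC4n], min 1 ((1/2)/(2*π*c1+1)),
    lt_min one_pos (by positivity), ?_⟩
  intro ε hε η b η' b' hη hb hη' hb' x x' ξ ξ' hxc hx'c hξc hξ'c hxe hx'e hξe hξ'e
  have hε0 : 0 ≤ ε := hε.1
  have hε1 : ε ≤ 1 := le_trans hε.2 (min_le_left _ _)
  have hD : ε * (2*π) * c1 ≤ 1/2 := by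
    have h' : ε ≤ (1/2)/(2*π*c1+1) := le_trans hε.2 (min_le_right _ _)
    have h'' : ε * (2*π*c1+1) ≤ 1/2 := (le_div_iff₀ hden).mp h'
    linarith
  have hc0le : (1+R)*G0 ≤ c0 := le_of_eq hc0d.symm
  have hc1g : R + (1+R)*k ≤ c1 := by rw [hc1d]; nlinarith
  have hc1a : R + (1+R)*|α| ≤ c1 := by rw [hc1d]; nlinarith
  have hψα : ∀ z : ℝ, |α * z| ≤ 0 + |α| * |z| := by
    intro z; rw [abs_mul]; simp
  have hψαl : ∀ z w : ℝ, |α * z - α * w| ≤ |α| * |z - w| := by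
    intro z w; rw [← mul_sub, abs_mul]
  have hc0a : (1+R)*0 ≤ c0 := by simpa using hc0n
  -- continuity of the nonlinearities
  have hPgc : Continuous fun z : ℝ => -η*z + (1-ε*η)*g z := by fun_prop
  have hPg'c : Continuous fun z : ℝ => -η'*z + (1-ε*η')*g z := by fun_prop
  have hPac : Continuous fun z : ℝ => -η*z + (1-ε*η)*(α*z) := by fun_prop
  have hPa'c : Continuous fun z : ℝ => -η'*z + (1-ε*η')*(α*z) := by fun_prop
  -- a priori bounds
  have hMx : ∀ s ∈ Set.Icc (0:ℝ) (2*π), |x s| ≤ M := by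
    intro s hs; rw [hMd]
    exact sol_bound (P := fun z => -η*z + (1-ε*η)*g z) hε0 hε1 hc0n hc1n hD hb
      (P_growth hε0 hε1 hη hgb hG0n hk hc0le hc1g) hxc hxe s hs
  have hMξ : ∀ s ∈ Set.Icc (0:ℝ) (2*π), |ξ s| ≤ M := by
    intro s hs; rw [hMd]
    exact sol_bound (P := fun z => -η*z + (1-ε*η)*(α*z)) hε0 hε1 hc0n hc1n hD hb
      (P_growth hε0 hε1 hη hψα le_rfl hα0 hc0a hc1a) hξc hξe s hs
  -- difference bounds
  have hQ0n' : 0 ≤ |η' - η| * Q0 := mul_nonneg (abs_nonneg _) hQ0n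
  have hdx : ∀ θ ∈ Set.Icc (0:ℝ) (2*π), |x' θ - x θ|
      ≤ 2*(ε*|b' - b| + ε*(2*π)*(|η' - η| *Q0)) := by
    refine diff_bound (P := fun z => -η*z + (1-ε*η)*g z)
      (P' := fun z => -η'*z + (1-ε*η')*g z) hε0 hc1n hQ0n' hD hPgc hPg'c
      (P_lip hε0 hε1 hη' hg hk hc1g) hxc hx'c ?_ hxe hx'e
    intro s hs
    refine le_trans (PQ_aux hε0 hε1 g (x s)) ?_
    apply mul_le_mul_of_nonneg_left _ (abs_nonneg _)
    rw [hQ0d]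
    nlinarith [hgb (x s), hMx s hs, mul_nonneg hα0 hMn,
      mul_le_mul_of_nonneg_left (hMx s hs) hk]
  have hdξ : ∀ θ ∈ Set.Icc (0:ℝ) (2*π), |ξ' θ - ξ θ|
      ≤ 2*(ε*|b' - b| + ε*(2*π)*(|η' - η| *Q0)) := by
    refine diff_bound (P := fun z => -η*z + (1-ε*η)*(α*z))
      (P' := fun z => -η'*z + (1-ε*η')*(α*z)) hε0 hc1n hQ0n' hD hPac hPa'c
      (P_lip hε0 hε1 hη' hψαl hα0 hc1a) hξc hξ'c ?_ hξe hξ'e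
    intro s hs
    refine le_trans (PQ_aux hε0 hε1 (fun z => α*z) (ξ s)) ?_
    apply mul_le_mul_of_nonneg_left _ (abs_nonneg _)
    rw [hQ0d]
    have hαξ : |α * ξ s| ≤ |α| * M := by
      rw [abs_mul]; exact mul_le_mul_of_nonneg_left (hMξ s hs) hα0
    nlinarith [hMξ s hs, mul_le_mul_of_nonneg_left (hMξ s hs) hk,
      mul_nonneg hk hMn]
  have hQ3n : 0 ≤ (1+R)*(μ*M) := mul_nonneg (by linarith) (mul_nonneg hμ hMn)
  have h1Rb : ∀ γ : ℝ, |γ| ≤ R → |1 - ε*γ| ≤ 1 + R := by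
    intro γ hγ
    calc |1 - ε*γ| ≤ |(1:ℝ)| + |ε*γ| := abs_sub 1 (ε*γ)
      _ = 1 + ε * |γ| := by rw [abs_one, abs_mul, abs_of_nonneg hε0]
      _ ≤ 1 + R := by nlinarith [abs_nonneg γ]
  have hdxξ : ∀ θ ∈ Set.Icc (0:ℝ) (2*π), |ξ θ - x θ|
      ≤ 2*(ε*|b - b| + ε*(2*π)*((1+R)*(μ*M))) := by
    refine diff_bound (P := fun z => -η*z + (1-ε*η)*g z)
      (P' := fun z => -η*z + (1-ε*η)*(α*z)) hε0 hc1n hQ3n hD hPgc hPac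
      (P_lip hε0 hε1 hη hψαl hα0 hc1a) hxc hξc ?_ hxe hξe
    intro s hs
    have he : (-η*(x s) + (1-ε*η)*(α*(x s))) - (-η*(x s) + (1-ε*η)*(g (x s)))
        = (1-ε*η)*(α*(x s) - g (x s)) := by ring
    show |(-η*(x s) + (1-ε*η)*(α*(x s))) - (-η*(x s) + (1-ε*η)*(g (x s)))|
      ≤ (1+R)*(μ*M)
    rw [he, abs_mul]
    have h2 : |α*(x s) - g (x s)| ≤ μ*M := by
      rw [abs_sub_comm]
      calc |g (x s) - α * x s| ≤ μ * |x s| := hgα (x s)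
        _ ≤ μ * M := mul_le_mul_of_nonneg_left (hMx s hs) hμ
    exact mul_le_mul (h1Rb η hη) h2 (abs_nonneg _) (by linarith)
  -- convert difference bounds to convenient forms
  set N := ‖((η' - η, b' - b) : ℝ × ℝ)‖ with hNdef
  have hN0 : 0 ≤ N := norm_nonneg _
  have hN1 : |η' - η| ≤ N := by
    rw [hNdef]
    simpa using norm_fst_le ((η' - η, b' - b) : ℝ × ℝ)
  have hN2 : |b' - b| ≤ N := by
    rw [hNdef]
    simpa using norm_snd_le ((η' - η, b' - b) : ℝ × ℝ)
  have hd1 : ∀ s ∈ Set.Icc (0:ℝ) (2*π), |x' s - x s| ≤ ε*CB*N := by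
    intro s hs
    have h := hdx s hs
    rw [hCBd]
    nlinarith [mul_nonneg hε0 (sub_nonneg.2 hN2),
      mul_nonneg (mul_nonneg (mul_nonneg hT hε0) hQ0n) (sub_nonneg.2 hN1)]
  have hd2 : ∀ s ∈ Set.Icc (0:ℝ) (2*π), |ξ' s - ξ s| ≤ ε*CB*N := by
    intro s hs
    have h := hdξ s hs
    rw [hCBd]
    nlinarith [mul_nonneg hε0 (sub_nonneg.2 hN2),
      mul_nonneg (mul_nonneg (mul_nonneg hT hε0) hQ0n) (sub_nonneg.2 hN1)]
  have hd3 : ∀ s ∈ Set.Icc (0:ℝ) (2*π), |ξ s - x s| ≤ ε*C3 := by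
    intro s hs
    have h := hdxξ s hs
    rw [sub_self, abs_zero, mul_zero] at h
    rw [hC3d]
    nlinarith
  -- pointwise bound on the combined integrand
  have hδ : ∀ s ∈ Set.Icc (0:ℝ) (2*π),
      |((-η' * x' s + (1 - ε * η') * g (x' s)) - (-η' * ξ' s + (1 - ε * η') * (α * ξ' s)))
        - ((-η * x s + (1 - ε * η) * g (x s)) - (-η * ξ s + (1 - ε * η) * (α * ξ s)))|
      ≤ ε*C4*N := by
    intro s hs
    have hXd := hd1 s hs
    have hΞd := hd2 s hs
    have hXΞ := hd3 s hs
    have hXM := hMx s hs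
    have hsplit : ((-η' * x' s + (1 - ε * η') * g (x' s))
          - (-η' * ξ' s + (1 - ε * η') * (α * ξ' s)))
        - ((-η * x s + (1 - ε * η) * g (x s)) - (-η * ξ s + (1 - ε * η) * (α * ξ s)))
        = (-(η' * ((x' s - x s) - (ξ' s - ξ s))))
          + (-((η' - η) * (x s - ξ s)))
          + ((1 - ε*η') * ((g (x' s) - g (x s)) - α * (ξ' s - ξ s)))
          + (-((ε * (η' - η)) * (g (x s) - α * ξ s))) := by ring
    have ht1 : |(-(η' * ((x' s - x s) - (ξ' s - ξ s))))| ≤ R * (ε*CB*N + ε*CB*N) := by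
      rw [abs_neg, abs_mul]
      exact mul_le_mul hη' (le_trans (abs_sub _ _) (add_le_add hXd hΞd))
        (abs_nonneg _) hR0
    have ht2 : |(-((η' - η) * (x s - ξ s)))| ≤ N * (ε*C3) := by
      rw [abs_neg, abs_mul, abs_sub_comm (x s) (ξ s)]
      exact mul_le_mul hN1 hXΞ (abs_nonneg _) hN0
    have hgd : |(g (x' s) - g (x s)) - α * (ξ' s - ξ s)| ≤ k*(ε*CB*N) + |α| *(ε*CB*N) := by
      have h1 := hg (x' s) (x s)
      have h2 := abs_sub (g (x' s) - g (x s)) (α * (ξ' s - ξ s))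
      rw [abs_mul] at h2
      have h3 : k * |x' s - x s| ≤ k * (ε*CB*N) := mul_le_mul_of_nonneg_left hXd hk
      have h4 : |α| * |ξ' s - ξ s| ≤ |α| * (ε*CB*N) := mul_le_mul_of_nonneg_left hΞd hα0
      linarith
    have ht3 : |(1 - ε*η') * ((g (x' s) - g (x s)) - α * (ξ' s - ξ s))|
        ≤ (1+R)*(k*(ε*CB*N) + |α| *(ε*CB*N)) := by
      rw [abs_mul]
      exact mul_le_mul (h1Rb η' hη') hgd (abs_nonneg _) (by linarith)
    have hgα' : |g (x s) - α * ξ s| ≤ μ*M + |α| *C3 := by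
      have he2 : g (x s) - α * ξ s = (g (x s) - α * x s) + α * (x s - ξ s) := by ring
      rw [he2]
      have hstep : |α * (x s - ξ s)| ≤ |α| * (ε*C3) := by
        rw [abs_mul, abs_sub_comm (x s) (ξ s)]
        exact mul_le_mul_of_nonneg_left hXΞ hα0
      calc |(g (x s) - α * x s) + α * (x s - ξ s)|
          ≤ |g (x s) - α * x s| + |α * (x s - ξ s)| := abs_add_le _ _
        _ ≤ μ * |x s| + |α| * (ε*C3) := add_le_add (hgα (x s)) hstep
        _ ≤ μ*M + |α| *C3 := by
            have h6 : μ * |x s| ≤ μ * M := mul_le_mul_of_nonneg_left hXM hμ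
            have h7 : ε * C3 ≤ C3 := by
              linarith [mul_le_mul_of_nonneg_right hε1 hC3n]
            have h8 : |α| * (ε*C3) ≤ |α| * C3 := mul_le_mul_of_nonneg_left h7 hα0
            linarith
    have ht4 : |(-((ε * (η' - η)) * (g (x s) - α * ξ s)))| ≤ ε*(N*(μ*M + |α| *C3)) := by
      rw [abs_neg, abs_mul, abs_mul, abs_of_nonneg hε0]
      have h5 : |η' - η| * |g (x s) - α * ξ s| ≤ N * (μ*M + |α| *C3) :=
        mul_le_mul hN1 hgα' (abs_nonneg _) hN0
      nlinarith [mul_le_mul_of_nonneg_left h5 hε0]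
    rw [hsplit]
    have hfinal : R*(ε*CB*N + ε*CB*N) + N*(ε*C3)
        + (1+R)*(k*(ε*CB*N) + |α| *(ε*CB*N)) + ε*(N*(μ*M + |α| *C3)) = ε*C4*N := by
      rw [hC4d]; ring
    refine le_trans (abs_add4 _ _ _ _) ?_
    linarith
  -- final combination
  have h2πmem : (2*π) ∈ Set.Icc (0:ℝ) (2*π) := ⟨hT, le_refl _⟩
  have hs1 := integ_aux (P := fun z => -η'*z + (1-ε*η')*g z) hPg'c hx'c h2πmem Real.continuous_sin
  have hs2 := integ_aux (P := fun z => -η'*z + (1-ε*η')*(α*z)) hPa'c hξ'c h2πmem Real.continuous_sin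
  have hs3 := integ_aux (P := fun z => -η*z + (1-ε*η)*g z) hPgc hxc h2πmem Real.continuous_sin
  have hs4 := integ_aux (P := fun z => -η*z + (1-ε*η)*(α*z)) hPac hξc h2πmem Real.continuous_sin
  have hcc1 := integ_aux (P := fun z => -η'*z + (1-ε*η')*g z) hPg'c hx'c h2πmem Real.continuous_cos
  have hcc2 := integ_aux (P := fun z => -η'*z + (1-ε*η')*(α*z)) hPa'c hξ'c h2πmem Real.continuous_cos
  have hcc3 := integ_aux (P := fun z => -η*z + (1-ε*η)*g z) hPgc hxc h2πmem Real.continuous_cos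
  have hcc4 := integ_aux (P := fun z => -η*z + (1-ε*η)*(α*z)) hPac hξc h2πmem Real.continuous_cos
  have hE1 : |((∫ s in (0:ℝ)..(2 * π), Real.sin s * (-η' * x' s + (1 - ε * η') * g (x' s)))
            - (∫ s in (0:ℝ)..(2 * π), Real.sin s * (-η' * ξ' s + (1 - ε * η') * (α * ξ' s))))
          - ((∫ s in (0:ℝ)..(2 * π), Real.sin s * (-η * x s + (1 - ε * η) * g (x s)))
            - (∫ s in (0:ℝ)..(2 * π), Real.sin s * (-η * ξ s + (1 - ε * η) * (α * ξ s))))|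
      ≤ (ε*C4*N) * (2*π) :=
    comb (w := Real.sin) (f1 := fun s => -η' * x' s + (1 - ε * η') * g (x' s))
      (f2 := fun s => -η' * ξ' s + (1 - ε * η') * (α * ξ' s))
      (f3 := fun s => -η * x s + (1 - ε * η) * g (x s))
      (f4 := fun s => -η * ξ s + (1 - ε * η) * (α * ξ s))
      (fun s => abs_sin_le_one s) hs1 hs2 hs3 hs4 hδ
  have hE2 : |((∫ s in (0:ℝ)..(2 * π), Real.cos s * (-η' * x' s + (1 - ε * η') * g (x' s)))
            - (∫ s in (0:ℝ)..(2 * π), Real.cos s * (-η' * ξ' s + (1 - ε * η') * (α * ξ' s))))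
          - ((∫ s in (0:ℝ)..(2 * π), Real.cos s * (-η * x s + (1 - ε * η) * g (x s)))
            - (∫ s in (0:ℝ)..(2 * π), Real.cos s * (-η * ξ s + (1 - ε * η) * (α * ξ s))))|
      ≤ (ε*C4*N) * (2*π) :=
    comb (w := Real.cos) (f1 := fun s => -η' * x' s + (1 - ε * η') * g (x' s))
      (f2 := fun s => -η' * ξ' s + (1 - ε * η') * (α * ξ' s))
      (f3 := fun s => -η * x s + (1 - ε * η) * g (x s))
      (f4 := fun s => -η * ξ s + (1 - ε * η) * (α * ξ s))
      (fun s => abs_cos_le_one s) hcc1 hcc2 hcc3 hcc4 hδ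
  rw [Prod.norm_def]
  have heq : (ε*C4*N) * (2*π) = 2*π*C4*ε*N := by ring
  apply max_le
  · rw [Real.norm_eq_abs]
    exact le_of_le_of_eq hE1 heq
  · rw [Real.norm_eq_abs]
    exact le_of_le_of_eq hE2 heq
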